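/- Let a ∈ L¹_loc([0,∞); ℂ) and let P, P_* be the solutions of the Krein system with coefficient a. Then for every r > 0 and every λ ∈ ℂ with Im(λ) ≠ 0 one has ∫₀^r conj(P(s, 0)) P(s, λ) ds ≠ 0; that is, the function λ ↦ K_r(0, λ) = ∫₀^r conj(P(s,0)) P(s,λ) ds has no zeros outside the real line. -/

import Mathlib

open MeasureTheory Filter

noncomputable section

/-- A Krein system with coefficient `a ∈ L¹_loc([0,∞); ℂ)`, in integral form:
`P` and `Ps` (= `P_*`) are locally absolutely continuous in `r` and satisfy
`∂P/∂r = iλP - conj(a)P_*`, `P(0,λ)=1` and `∂P_*/∂r = -aP`, `P_*(0,λ)=1`. -/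
def IsKreinSystem (a : ℝ → ℂ) (P Ps : ℝ → ℂ → ℂ) : Prop :=
  MeasureTheory.LocallyIntegrableOn a (Set.Ici 0) ∧
  (∀ z : ℂ, ContinuousOn (fun r => P r z) (Set.Ici 0)) ∧
  (∀ z : ℂ, ContinuousOn (fun r => Ps r z) (Set.Ici 0)) ∧
  ∀ z : ℂ, ∀ r : ℝ, 0 ≤ r →
    (P r z = 1 + ∫ s in (0:ℝ)..r,
        (Complex.I * z * P s z - (starRingEnd ℂ) (a s) * Ps s z)) ∧
    (Ps r z = 1 - ∫ s in (0:ℝ)..r, a s * P s z)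

open Set

lemma krein_parts {r : ℝ} (hr : 0 ≤ r) {φ ψ u v : ℝ → ℂ} {u0 v0 : ℂ}
    (hφ : IntegrableOn φ (Ioc 0 r))
    (hψ : IntegrableOn ψ (Ioc 0 r))
    (hu : ∀ s ∈ Icc (0:ℝ) r, u s = u0 + ∫ t in Ioc 0 s, φ t)
    (hv : ∀ s ∈ Icc (0:ℝ) r, v s = v0 + ∫ t in Ioc 0 s, ψ t) :
    u r * v r - u0 * v0 = ∫ s in Ioc 0 r, (φ s * v s + u s * ψ s) := by
  have hrmem : r ∈ Icc (0:ℝ) r := ⟨hr, le_refl r⟩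
  have h0mem : (0:ℝ) ∈ Icc (0:ℝ) r := ⟨le_refl 0, hr⟩
  have hφIcc : IntegrableOn φ (Icc 0 r) := by
    rwa [integrableOn_Icc_iff_integrableOn_Ioc]
  have hψIcc : IntegrableOn ψ (Icc 0 r) := by
    rwa [integrableOn_Icc_iff_integrableOn_Ioc]
  have hucont : ContinuousOn u (Icc 0 r) := by
    apply (((continuousOn_const (c := u0)).add (intervalIntegral.continuousOn_primitive hφIcc))).congr
    intro s hs; rw [hu s hs]; rfl
  have hvcont : ContinuousOn v (Icc 0 r) := by
    apply (((continuousOn_const (c := v0)).add (intervalIntegral.continuousOn_primitive hψIcc))).congr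
    intro s hs; rw [hv s hs]; rfl
  -- integral splitting: for t in Icc 0 r, u r - u t = ∫ over Ioc t r
  have husplit : ∀ t ∈ Icc (0:ℝ) r, (∫ s in Ioc t r, φ s) = u r - u t := by
    intro t ht
    have hsplit : ∫ s in Ioc 0 r, φ s = (∫ s in Ioc 0 t, φ s) + ∫ s in Ioc t r, φ s := by
      rw [← setIntegral_union (Ioc_disjoint_Ioc.mpr ((min_le_left t r).trans (le_max_right 0 t))) measurableSet_Ioc
        (hφ.mono_set (Ioc_subset_Ioc le_rfl ht.2)) (hφ.mono_set (Ioc_subset_Ioc ht.1 le_rfl)),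
        Ioc_union_Ioc_eq_Ioc ht.1 ht.2]
    rw [hu r hrmem, hu t ht]
    rw [hsplit]; ring
  -- Fubini swap on the triangle
  have swap : (∫ s in Ioc (0:ℝ) r, φ s * ∫ t in Ioc (0:ℝ) s, ψ t)
      = ∫ t in Ioc (0:ℝ) r, (∫ s in Ioc t r, φ s) * ψ t := by
    set μ := volume.restrict (Ioc (0:ℝ) r) with hμ
    have hTmeas : MeasurableSet {q : ℝ × ℝ | q.2 ≤ q.1} :=
      (isClosed_le continuous_snd continuous_fst).measurableSet
    have hFint : Integrable (Function.uncurry fun s t =>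
        ({q : ℝ × ℝ | q.2 ≤ q.1}).indicator (fun q => φ q.1 * ψ q.2) (s, t)) (μ.prod μ) := by
      have : Integrable (fun q : ℝ × ℝ => φ q.1 * ψ q.2) (μ.prod μ) := hφ.mul_prod hψ
      exact this.indicator hTmeas
    have := integral_integral_swap hFint
    have hL : (∫ s, ∫ t, ({q : ℝ × ℝ | q.2 ≤ q.1}).indicator
          (fun q => φ q.1 * ψ q.2) (s, t) ∂μ ∂μ)
        = ∫ s in Ioc (0:ℝ) r, φ s * ∫ t in Ioc (0:ℝ) s, ψ t := by
      apply setIntegral_congr_fun measurableSet_Ioc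
      intro s hs
      dsimp only
      have h1 : (fun t => ({q : ℝ × ℝ | q.2 ≤ q.1}).indicator
          (fun q => φ q.1 * ψ q.2) (s, t)) = (Iic s).indicator (fun t => φ s * ψ t) := by
        funext t
        simp only [Set.indicator_apply, Set.mem_setOf_eq, Set.mem_Iic]
      rw [h1, integral_indicator measurableSet_Iic, hμ,
        Measure.restrict_restrict measurableSet_Iic]
      have h2 : Iic s ∩ Ioc 0 r = Ioc 0 s := by
        ext t; simp only [mem_inter_iff, mem_Iic, mem_Ioc]
        exact ⟨fun h => ⟨h.2.1, h.1⟩, fun h => ⟨h.2, h.1, h.2.trans hs.2⟩⟩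
      rw [h2, integral_const_mul]
    have hR : (∫ t, ∫ s, ({q : ℝ × ℝ | q.2 ≤ q.1}).indicator
          (fun q => φ q.1 * ψ q.2) (s, t) ∂μ ∂μ)
        = ∫ t in Ioc (0:ℝ) r, (∫ s in Ioc t r, φ s) * ψ t := by
      apply setIntegral_congr_fun measurableSet_Ioc
      intro t ht
      dsimp only
      have h1 : (fun s => ({q : ℝ × ℝ | q.2 ≤ q.1}).indicator
          (fun q => φ q.1 * ψ q.2) (s, t)) = (Ici t).indicator (fun s => φ s * ψ t) := by
        funext s
        simp only [Set.indicator_apply, Set.mem_setOf_eq, Set.mem_Ici]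
      rw [h1, integral_indicator measurableSet_Ici, hμ,
        Measure.restrict_restrict measurableSet_Ici]
      have h2 : Ici t ∩ Ioc 0 r = Icc t r := by
        ext s; simp only [mem_inter_iff, mem_Ici, mem_Ioc, mem_Icc]
        exact ⟨fun h => ⟨h.1, h.2.2⟩, fun h => ⟨h.1, ht.1.trans_le h.1, h.2⟩⟩
      rw [h2, integral_Icc_eq_integral_Ioc, integral_mul_const]
    rw [← hL, this, hR]
  -- integrability of products
  have hIcc_cpt : IsCompact (Icc (0:ℝ) r) := isCompact_Icc
  have hφv : IntegrableOn (fun s => φ s * v s) (Ioc 0 r) :=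
    (hφIcc.mul_continuousOn hvcont hIcc_cpt).mono_set Ioc_subset_Icc_self
  have huψ : IntegrableOn (fun s => u s * ψ s) (Ioc 0 r) := by
    have : IntegrableOn (fun s => ψ s * u s) (Icc 0 r) :=
      hψIcc.mul_continuousOn hucont hIcc_cpt
    exact ((this.mono_set Ioc_subset_Icc_self).congr_fun
      (fun s _ => mul_comm (ψ s) (u s)) measurableSet_Ioc)
  have hvr : (∫ t in Ioc (0:ℝ) r, ψ t) = v r - v0 := by rw [hv r hrmem]; ring
  have hur : (∫ s in Ioc (0:ℝ) r, φ s) = u r - u0 := by rw [hu r hrmem]; ring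
  have hv_eq : (∫ s in Ioc (0:ℝ) r, φ s * v s)
      = (∫ s in Ioc (0:ℝ) r, φ s) * v0 + ∫ s in Ioc (0:ℝ) r, φ s * ∫ t in Ioc 0 s, ψ t := by
    have hcong : ∀ s ∈ Ioc (0:ℝ) r, φ s * v s = φ s * v0 + φ s * ∫ t in Ioc 0 s, ψ t := by
      intro s hs; rw [hv s ⟨hs.1.le, hs.2⟩]; ring
    rw [setIntegral_congr_fun measurableSet_Ioc hcong, integral_add (hφ.mul_const v0)
      ((hφIcc.mul_continuousOn (intervalIntegral.continuousOn_primitive hψIcc)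
        hIcc_cpt).mono_set Ioc_subset_Icc_self), integral_mul_const]
  have step2 : (∫ s in Ioc (0:ℝ) r, φ s * ∫ t in Ioc 0 s, ψ t)
      = u r * (v r - v0) - ∫ t in Ioc (0:ℝ) r, u t * ψ t := by
    rw [swap]
    have hcong : ∀ t ∈ Ioc (0:ℝ) r, (∫ s in Ioc t r, φ s) * ψ t = u r * ψ t - u t * ψ t := by
      intro t ht; rw [husplit t ⟨ht.1.le, ht.2⟩]; ring
    rw [setIntegral_congr_fun measurableSet_Ioc hcong,
      integral_sub (hψ.const_mul (u r)) huψ, integral_const_mul, hvr]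
  rw [integral_add hφv huψ, hv_eq, hur, step2]
  ring
lemma MeasureTheory.Integrable.conj' {μ : Measure ℝ} {f : ℝ → ℂ} (hf : Integrable f μ) :
    Integrable (fun x => (starRingEnd ℂ) (f x)) μ :=
  hf.mono (Complex.continuous_conj.comp_aestronglyMeasurable hf.aestronglyMeasurable)
    (Filter.Eventually.of_forall fun x => by simp)


lemma krein_identity (a : ℝ → ℂ) (P Ps : ℝ → ℂ → ℂ) (hK : IsKreinSystem a P Ps)
    (w z : ℂ) (r : ℝ) (hr : 0 ≤ r) :
    (starRingEnd ℂ) (P r w) * P r z - (starRingEnd ℂ) (Ps r w) * Ps r z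
      = Complex.I * (z - (starRingEnd ℂ) w) *
        ∫ s in Ioc (0:ℝ) r, (starRingEnd ℂ) (P s w) * P s z := by
  obtain ⟨ha, hPc, hPsc, heq⟩ := hK
  have hsub : Icc (0:ℝ) r ⊆ Ici 0 := fun x hx => hx.1
  have haI : IntegrableOn a (Icc 0 r) :=
    ha.integrableOn_compact_subset hsub isCompact_Icc
  have haI' : IntegrableOn (fun s => (starRingEnd ℂ) (a s)) (Icc 0 r) := haI.conj'
  have hPcc : ∀ z, ContinuousOn (fun s => P s z) (Icc 0 r) := fun z => (hPc z).mono hsub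
  have hPscc : ∀ z, ContinuousOn (fun s => Ps s z) (Icc 0 r) := fun z => (hPsc z).mono hsub
  -- density functions
  set F : ℂ → ℝ → ℂ :=
    fun z s => Complex.I * z * P s z - (starRingEnd ℂ) (a s) * Ps s z with hF
  set G : ℂ → ℝ → ℂ := fun z s => -(a s * P s z) with hG
  have hFint : ∀ z, IntegrableOn (F z) (Icc 0 r) := by
    intro z
    apply Integrable.sub
    · exact (ContinuousOn.integrableOn_compact isCompact_Icc
        ((continuousOn_const.mul (hPcc z))))
    · exact haI'.mul_continuousOn (hPscc z) isCompact_Icc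
  have hGint : ∀ z, IntegrableOn (G z) (Icc 0 r) := by
    intro z
    exact (haI.mul_continuousOn (hPcc z) isCompact_Icc).neg
  have hPeq : ∀ z, ∀ s ∈ Icc (0:ℝ) r, P s z = 1 + ∫ t in Ioc 0 s, F z t := by
    intro z s hs
    rw [(heq z s hs.1).1, intervalIntegral.integral_of_le hs.1]
  have hPseq : ∀ z, ∀ s ∈ Icc (0:ℝ) r, Ps s z = 1 + ∫ t in Ioc 0 s, G z t := by
    intro z s hs
    rw [(heq z s hs.1).2, intervalIntegral.integral_of_le hs.1, hG]
    rw [sub_eq_add_neg, ← integral_neg]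
  -- conjugated versions
  have hPconj : ∀ s ∈ Icc (0:ℝ) r, (starRingEnd ℂ) (P s w)
      = 1 + ∫ t in Ioc 0 s, (starRingEnd ℂ) (F w t) := by
    intro s hs
    rw [hPeq w s hs, map_add, map_one, ← integral_conj]
  have hPsconj : ∀ s ∈ Icc (0:ℝ) r, (starRingEnd ℂ) (Ps s w)
      = 1 + ∫ t in Ioc 0 s, (starRingEnd ℂ) (G w t) := by
    intro s hs
    rw [hPseq w s hs, map_add, map_one, ← integral_conj]
  have hFwc : IntegrableOn (fun t => (starRingEnd ℂ) (F w t)) (Ioc 0 r) :=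
    ((hFint w).mono_set Ioc_subset_Icc_self).conj'
  have hGwc : IntegrableOn (fun t => (starRingEnd ℂ) (G w t)) (Ioc 0 r) :=
    ((hGint w).mono_set Ioc_subset_Icc_self).conj'
  have pair1 := krein_parts hr hFwc ((hFint z).mono_set Ioc_subset_Icc_self)
    hPconj (hPeq z)
  have pair2 := krein_parts hr hGwc ((hGint z).mono_set Ioc_subset_Icc_self)
    hPsconj (hPseq z)
  rw [mul_one] at pair1 pair2
  -- integrability of the four products
  have hconjPw : ContinuousOn (fun s => (starRingEnd ℂ) (P s w)) (Icc 0 r) :=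
    Complex.continuous_conj.comp_continuousOn (hPcc w)
  have hconjPsw : ContinuousOn (fun s => (starRingEnd ℂ) (Ps s w)) (Icc 0 r) :=
    Complex.continuous_conj.comp_continuousOn ((hPsc w).mono hsub)
  have i1 : IntegrableOn (fun s => (starRingEnd ℂ) (F w s) * P s z + (starRingEnd ℂ) (P s w) * F z s) (Ioc 0 r) := by
    apply Integrable.add
    · exact ((IntegrableOn.mul_continuousOn ((hFint w).conj') (hPcc z)
        isCompact_Icc)).mono_set Ioc_subset_Icc_self
    · exact (((hFint z).mul_continuousOn hconjPw isCompact_Icc).mono_set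
        Ioc_subset_Icc_self).congr_fun (fun s _ => mul_comm _ _) measurableSet_Ioc
  have i2 : IntegrableOn (fun s => (starRingEnd ℂ) (G w s) * Ps s z + (starRingEnd ℂ) (Ps s w) * G z s) (Ioc 0 r) := by
    apply Integrable.add
    · exact ((IntegrableOn.mul_continuousOn ((hGint w).conj') (hPscc z)
        isCompact_Icc)).mono_set Ioc_subset_Icc_self
    · exact (((hGint z).mul_continuousOn hconjPsw isCompact_Icc).mono_set
        Ioc_subset_Icc_self).congr_fun (fun s _ => mul_comm _ _) measurableSet_Ioc
  have key : (starRingEnd ℂ) (P r w) * P r z - (starRingEnd ℂ) (Ps r w) * Ps r z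
      = ∫ s in Ioc (0:ℝ) r,
          ((starRingEnd ℂ) (F w s) * P s z + (starRingEnd ℂ) (P s w) * F z s
            - ((starRingEnd ℂ) (G w s) * Ps s z + (starRingEnd ℂ) (Ps s w) * G z s)) := by
    rw [integral_sub i1 i2, ← pair1, ← pair2]; ring
  rw [key, ← integral_const_mul]
  apply setIntegral_congr_fun measurableSet_Ioc
  intro s _
  simp only [hF, hG, map_sub, map_mul, map_neg, Complex.conj_conj, Complex.conj_I]
  ring

lemma gronwall_zero {r : ℝ} (hr : 0 ≤ r) {h c : ℝ → ℝ}
    (hhc : ContinuousOn h (Icc 0 r)) (hh0 : ∀ s ∈ Icc (0:ℝ) r, 0 ≤ h s)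
    (hc : IntegrableOn c (Icc 0 r)) (hc0 : ∀ s, 0 ≤ c s)
    (hineq : ∀ t ∈ Icc (0:ℝ) r, h t ≤ h r + ∫ s in Ioc t r, c s * h s)
    (hhr : h r = 0) : h 0 = 0 := by
  have hch : IntegrableOn (fun s => c s * h s) (Icc 0 r) :=
    hc.mul_continuousOn hhc isCompact_Icc
  set A : Set ℝ := {t | t ∈ Icc (0:ℝ) r ∧ ∀ s ∈ Icc t r, h s = 0} with hA
  have hrA : r ∈ A := by
    refine ⟨⟨hr, le_refl r⟩, fun s hs => ?_⟩
    have : s = r := le_antisymm hs.2 hs.1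
    rwa [this]
  have hAbdd : BddBelow A := ⟨0, fun t ht => ht.1.1⟩
  have hAne : A.Nonempty := ⟨r, hrA⟩
  set t₀ := sInf A with ht₀def
  have ht₀0 : 0 ≤ t₀ := le_csInf hAne (fun t ht => ht.1.1)
  have ht₀r : t₀ ≤ r := csInf_le hAbdd hrA
  have hzeroIoc : ∀ s ∈ Ioc t₀ r, h s = 0 := by
    intro s hs
    obtain ⟨t, htA, hts⟩ := (csInf_lt_iff hAbdd hAne).mp hs.1
    exact htA.2 s ⟨hts.le, hs.2⟩
  have hzeroIcc : ∀ s ∈ Icc t₀ r, h s = 0 := by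
    intro s hs
    rcases eq_or_lt_of_le hs.1 with heq | hlt
    · rcases eq_or_lt_of_le ht₀r with heq2 | hlt2
      · rw [← heq, heq2]; exact hhr
      · -- continuity from the right
        have hne : Filter.NeBot (nhdsWithin t₀ (Ioc t₀ r)) := by
          rw [← mem_closure_iff_nhdsWithin_neBot, closure_Ioc (ne_of_lt hlt2)]
          exact ⟨le_refl t₀, ht₀r⟩
        have h1 : Filter.Tendsto h (nhdsWithin t₀ (Ioc t₀ r)) (nhds (h t₀)) := by
          apply Filter.Tendsto.mono_left (hhc t₀ ⟨ht₀0, ht₀r⟩)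
          exact nhdsWithin_mono t₀ (fun x hx => ⟨ht₀0.trans hx.1.le, hx.2⟩)
        have h2 : Filter.Tendsto h (nhdsWithin t₀ (Ioc t₀ r)) (nhds 0) := by
          apply Filter.Tendsto.congr' _ tendsto_const_nhds
          filter_upwards [self_mem_nhdsWithin] with x hx
          exact (hzeroIoc x hx).symm
        rw [← heq, tendsto_nhds_unique h1 h2]
    · exact hzeroIoc s ⟨hlt, hs.2⟩
  rcases eq_or_lt_of_le ht₀0 with heq0 | hpos
  · exact hzeroIcc 0 ⟨le_of_eq heq0.symm, hr⟩
  -- t₀ > 0 : derive a contradiction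
  exfalso
  -- find t₁ < t₀ with ∫_{Ioc t₁ t₀} c < 1
  have hcIcc : IntegrableOn c (Icc 0 t₀) :=
    hc.mono_set (Icc_subset_Icc le_rfl ht₀r)
  have hIcont : ContinuousOn (fun x => ∫ s in Ioc 0 x, c s) (Icc 0 t₀) :=
    intervalIntegral.continuousOn_primitive hcIcc
  set I : ℝ → ℝ := fun x => ∫ s in Ioc 0 x, c s with hIdef
  have hneIco : Filter.NeBot (nhdsWithin t₀ (Ico 0 t₀)) := by
    rw [← mem_closure_iff_nhdsWithin_neBot, closure_Ico hpos.ne]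
    exact ⟨ht₀0, le_refl t₀⟩
  have htend : Filter.Tendsto I (nhdsWithin t₀ (Ico 0 t₀)) (nhds (I t₀)) := by
    apply Filter.Tendsto.mono_left (hIcont t₀ ⟨ht₀0, le_refl t₀⟩)
    exact nhdsWithin_mono t₀ (fun x hx => ⟨hx.1, hx.2.le⟩)
  have hev : ∀ᶠ x in nhdsWithin t₀ (Ico 0 t₀), I t₀ - I x < 1 := by
    have : ∀ᶠ y in nhds (I t₀), I t₀ - y < 1 :=
      eventually_gt_nhds (by linarith : I t₀ - 1 < I t₀) |>.mono (fun y hy => by linarith)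
    exact htend.eventually this
  obtain ⟨t₁, hlt1, ht₁mem⟩ :=
    (hev.and (eventually_mem_nhdsWithin (s := Ico 0 t₀) (a := t₀))).exists
  have ht₁0 : 0 ≤ t₁ := ht₁mem.1
  have ht₁t₀ : t₁ < t₀ := ht₁mem.2
  have hsplitc : (∫ s in Ioc t₁ t₀, c s) = I t₀ - I t₁ := by
    have : I t₀ = I t₁ + ∫ s in Ioc t₁ t₀, c s := by
      rw [hIdef]
      rw [← setIntegral_union (Ioc_disjoint_Ioc.mpr ((min_le_left t₁ t₀).trans
          (le_max_right 0 t₁))) measurableSet_Ioc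
        (hcIcc.mono_set (fun x hx => ⟨hx.1.le, hx.2.trans ht₁t₀.le⟩))
        (hcIcc.mono_set (fun x hx => ⟨ht₁0.trans hx.1.le, hx.2⟩)),
        Ioc_union_Ioc_eq_Ioc ht₁0 ht₁t₀.le]
    linarith
  have hcint1 : (∫ s in Ioc t₁ t₀, c s) < 1 := by rw [hsplitc]; linarith
  -- maximum of h on [t₁, t₀]
  have hsub2 : Icc t₁ t₀ ⊆ Icc 0 r := Icc_subset_Icc ht₁0 ht₀r
  obtain ⟨x, hxmem, hxmax⟩ := isCompact_Icc.exists_isMaxOn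
    (Set.nonempty_Icc.mpr ht₁t₀.le) (hhc.mono hsub2)
  set M := h x with hM
  have hM0 : 0 ≤ M := hh0 x (hsub2 hxmem)
  have hxr : x ∈ Icc (0:ℝ) r := hsub2 hxmem
  -- the key inequality at x
  have hx_t₀ : x ≤ t₀ := hxmem.2
  have hsplit2 : (∫ s in Ioc x r, c s * h s)
      = (∫ s in Ioc x t₀, c s * h s) + ∫ s in Ioc t₀ r, c s * h s := by
    rw [← setIntegral_union (Ioc_disjoint_Ioc.mpr ((min_le_left t₀ r).trans
        (le_max_right x t₀))) measurableSet_Ioc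
      (hch.mono_set (fun y hy => ⟨hxr.1.trans hy.1.le, hy.2.trans ht₀r⟩))
      (hch.mono_set (fun y hy => ⟨ht₀0.trans hy.1.le, hy.2⟩)),
      Ioc_union_Ioc_eq_Ioc hx_t₀ ht₀r]
  have hzero2 : (∫ s in Ioc t₀ r, c s * h s) = 0 := by
    rw [setIntegral_congr_fun (g := fun _ => (0:ℝ)) measurableSet_Ioc
      (fun s hs => by simp [hzeroIoc s hs])]
    simp
  have hmono1 : (∫ s in Ioc x t₀, c s * h s) ≤ ∫ s in Ioc x t₀, c s * M := by
    apply setIntegral_mono_on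
      (hch.mono_set (fun y hy => ⟨hxr.1.trans hy.1.le, hy.2.trans ht₀r⟩))
      ((hc.mono_set (fun y hy => ⟨hxr.1.trans hy.1.le, hy.2.trans ht₀r⟩)).mul_const M)
      measurableSet_Ioc
    intro s hs
    have hsmem : s ∈ Icc t₁ t₀ := ⟨hxmem.1.trans hs.1.le, hs.2⟩
    exact mul_le_mul_of_nonneg_left (hxmax hsmem) (hc0 s)
  have hmono2 : (∫ s in Ioc x t₀, c s * M) ≤ (∫ s in Ioc t₁ t₀, c s) * M := by
    rw [← integral_mul_const]
    apply setIntegral_mono_set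
      ((hc.mono_set (fun y hy => ⟨ht₁0.trans hy.1.le, hy.2.trans ht₀r⟩)).mul_const M)
      (Filter.Eventually.of_forall (fun s => mul_nonneg (hc0 s) hM0))
      (HasSubset.Subset.eventuallyLE (Ioc_subset_Ioc_left hxmem.1))
  have hfinal : M ≤ (∫ s in Ioc t₁ t₀, c s) * M := by
    have := hineq x hxr
    rw [hsplit2, hzero2, hhr] at this
    simpa using this.trans (by linarith)
  have hM_zero : M = 0 := by nlinarith
  -- hence t₁ ∈ A, contradicting sInf
  have ht₁A : t₁ ∈ A := by
    refine ⟨⟨ht₁0, ht₁t₀.le.trans ht₀r⟩, fun s hs => ?_⟩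
    rcases le_total s t₀ with hst | hst
    · have hsmem : s ∈ Icc t₁ t₀ := ⟨hs.1, hst⟩
      have hle : h s ≤ M := hxmax hsmem
      have h0 := hh0 s (hsub2 hsmem)
      linarith
    · exact hzeroIcc s ⟨hst, hs.2⟩
  exact absurd (csInf_le hAbdd ht₁A) (not_le.mpr ht₁t₀)
/-- The function `λ ↦ K_r(0, λ) = ∫₀^r conj(P(s,0)) P(s,λ) ds` has no zeros outside the
real line. -/
theorem kreinK_ne_zero
    (a : ℝ → ℂ) (P Ps : ℝ → ℂ → ℂ)
    (hK : IsKreinSystem a P Ps)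
    (r : ℝ) (hr : 0 < r) :
    ∀ lam : ℂ, lam.im ≠ 0 →
      (∫ s in (0:ℝ)..r, (starRingEnd ℂ) (P s 0) * P s lam) ≠ 0 := by
  intro lam hlam h0
  rw [intervalIntegral.integral_of_le hr.le] at h0
  obtain ⟨ha, hPc, hPsc, heq⟩ := hK
  have hK' : IsKreinSystem a P Ps := ⟨ha, hPc, hPsc, heq⟩
  have hsub : Icc (0:ℝ) r ⊆ Ici 0 := fun x hx => hx.1
  have hP00 : ∀ z, P 0 z = 1 := by
    intro z
    rw [(heq z 0 le_rfl).1, intervalIntegral.integral_same, add_zero]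
  have hPs00 : ∀ z, Ps 0 z = 1 := by
    intro z
    rw [(heq z 0 le_rfl).2, intervalIntegral.integral_same, sub_zero]
  -- identity applications
  have idC := krein_identity a P Ps hK' 0 lam r hr.le
  rw [h0, mul_zero] at idC
  have eqC : (starRingEnd ℂ) (P r 0) * P r lam
      = (starRingEnd ℂ) (Ps r 0) * Ps r lam := by
    linear_combination idC
  have idA := krein_identity a P Ps hK' 0 0 r hr.le
  have eqA : Complex.normSq (P r 0) = Complex.normSq (Ps r 0) := by
    have : ((Complex.normSq (P r 0) : ℂ)) = ((Complex.normSq (Ps r 0) : ℂ)) := by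
      rw [Complex.normSq_eq_conj_mul_self, Complex.normSq_eq_conj_mul_self]
      simp only [map_zero, sub_zero] at idA
      linear_combination idA
    exact_mod_cast this
  -- Q_r > 0
  set Qr : ℝ := ∫ s in Ioc (0:ℝ) r, Complex.normSq (P s lam) with hQr
  have hPlamc : ContinuousOn (fun s => P s lam) (Icc 0 r) := (hPc lam).mono hsub
  have hgc : ContinuousOn (fun s => Complex.normSq (P s lam)) (Icc 0 r) :=
    Complex.continuous_normSq.comp_continuousOn hPlamc
  have hgint : IntegrableOn (fun s => Complex.normSq (P s lam)) (Icc 0 r) :=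
    ContinuousOn.integrableOn_compact isCompact_Icc hgc
  have hQpos : 0 < Qr := by
    have hcw : ContinuousWithinAt (fun s => Complex.normSq (P s lam)) (Icc 0 r) 0 :=
      hgc 0 ⟨le_rfl, hr.le⟩
    have h1 : (fun s => Complex.normSq (P s lam)) 0 = 1 := by
      simp [hP00 lam]
    have hev : ∀ᶠ x in nhdsWithin 0 (Icc 0 r), Complex.normSq (P x lam) > 1/2 := by
      apply hcw.eventually
      rw [h1]
      exact eventually_gt_nhds (by norm_num)
    rw [eventually_nhdsWithin_iff, Metric.eventually_nhds_iff] at hev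
    obtain ⟨ε, hε, hevball⟩ := hev
    set ε₂ : ℝ := min (ε/2) r with hε₂def
    have hε₂pos : 0 < ε₂ := lt_min (by linarith) hr
    have hε₂r : ε₂ ≤ r := min_le_right _ _
    have hsplit : Qr = (∫ s in Ioc (0:ℝ) ε₂, Complex.normSq (P s lam))
        + ∫ s in Ioc ε₂ r, Complex.normSq (P s lam) := by
      rw [hQr, ← setIntegral_union (Ioc_disjoint_Ioc.mpr ((min_le_left ε₂ r).trans
          (le_max_right 0 ε₂))) measurableSet_Ioc
        (hgint.mono_set (fun y hy => ⟨hy.1.le, hy.2.trans hε₂r⟩))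
        (hgint.mono_set (fun y hy => ⟨hε₂pos.le.trans hy.1.le, hy.2⟩)),
        Ioc_union_Ioc_eq_Ioc hε₂pos.le hε₂r]
    have hlow : ε₂ * (1/2) ≤ ∫ s in Ioc (0:ℝ) ε₂, Complex.normSq (P s lam) := by
      have hconst : (∫ _ in Ioc (0:ℝ) ε₂, (1/2 : ℝ)) = ε₂ * (1/2) := by
        simp [Real.volume_Ioc, hε₂pos.le]
      rw [← hconst]
      apply setIntegral_mono_on (integrable_const _)
        (hgint.mono_set (fun y hy => ⟨hy.1.le, hy.2.trans hε₂r⟩)) measurableSet_Ioc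
      intro s hs
      have hsmem : s ∈ Icc (0:ℝ) r := ⟨hs.1.le, hs.2.trans hε₂r⟩
      have hd : dist s 0 < ε := by
        rw [Real.dist_eq, sub_zero, abs_of_nonneg hs.1.le]
        calc s ≤ ε₂ := hs.2
          _ ≤ ε/2 := min_le_left _ _
          _ < ε := by linarith
      exact (hevball hd hsmem).le
    have hnn : 0 ≤ ∫ s in Ioc ε₂ r, Complex.normSq (P s lam) :=
      setIntegral_nonneg measurableSet_Ioc (fun s _ => Complex.normSq_nonneg _)
    rw [hsplit]
    nlinarith
  -- identity B
  have idB := krein_identity a P Ps hK' lam lam r hr.le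
  have hQcast : (∫ s in Ioc (0:ℝ) r, (starRingEnd ℂ) (P s lam) * P s lam)
      = (Qr : ℂ) := by
    calc ∫ s in Ioc (0:ℝ) r, (starRingEnd ℂ) (P s lam) * P s lam
        = ∫ s in Ioc (0:ℝ) r, ((Complex.normSq (P s lam) : ℝ) : ℂ) := by
          apply setIntegral_congr_fun measurableSet_Ioc
          intro s _
          dsimp only
          rw [← Complex.normSq_eq_conj_mul_self]
      _ = (Qr : ℂ) := by rw [hQr]; exact integral_ofReal
  rw [hQcast] at idB
  have hsubconj : Complex.I * (lam - (starRingEnd ℂ) lam) * (Qr : ℂ)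
      = ((-(2 * lam.im * Qr) : ℝ) : ℂ) := by
    rw [Complex.sub_conj]
    push_cast
    linear_combination (2 * (lam.im:ℂ) * (Qr:ℂ)) * Complex.I_mul_I
  rw [hsubconj] at idB
  by_cases hP0 : P r 0 = 0
  · -- Gronwall case: P r 0 = 0 forces everything zero, contradiction with P 0 0 = 1
    have hPs0 : Ps r 0 = 0 := by
      have h2 : Complex.normSq (Ps r 0) = 0 := by rw [← eqA, hP0, map_zero]
      exact Complex.normSq_eq_zero.mp h2
    have haI : IntegrableOn a (Icc 0 r) :=
      ha.integrableOn_compact_subset hsub isCompact_Icc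
    have hP0c : ContinuousOn (fun s => P s 0) (Icc 0 r) := (hPc 0).mono hsub
    have hPs0c : ContinuousOn (fun s => Ps s 0) (Icc 0 r) := (hPsc 0).mono hsub
    set F0 : ℝ → ℂ := fun s => Complex.I * 0 * P s 0 - (starRingEnd ℂ) (a s) * Ps s 0
      with hF0def
    set G0 : ℝ → ℂ := fun s => a s * P s 0 with hG0def
    have hF0int : IntegrableOn F0 (Icc 0 r) := by
      apply Integrable.sub
      · exact ContinuousOn.integrableOn_compact isCompact_Icc
          (continuousOn_const.mul hP0c)
      · exact IntegrableOn.mul_continuousOn haI.conj' hPs0c isCompact_Icc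
    have hG0int : IntegrableOn G0 (Icc 0 r) :=
      haI.mul_continuousOn hP0c isCompact_Icc
    have hPeq0 : ∀ s ∈ Icc (0:ℝ) r, P s 0 = 1 + ∫ t in Ioc 0 s, F0 t := by
      intro s hs
      rw [(heq 0 s hs.1).1, intervalIntegral.integral_of_le hs.1]
    have hPseq0 : ∀ s ∈ Icc (0:ℝ) r, Ps s 0 = 1 - ∫ t in Ioc 0 s, G0 t := by
      intro s hs
      rw [(heq 0 s hs.1).2, intervalIntegral.integral_of_le hs.1]
    have hFsplit : ∀ t ∈ Icc (0:ℝ) r, P r 0 - P t 0 = ∫ s in Ioc t r, F0 s := by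
      intro t ht
      have : (∫ s in Ioc (0:ℝ) r, F0 s)
          = (∫ s in Ioc (0:ℝ) t, F0 s) + ∫ s in Ioc t r, F0 s := by
        rw [← setIntegral_union (Ioc_disjoint_Ioc.mpr ((min_le_left t r).trans
            (le_max_right 0 t))) measurableSet_Ioc
          (hF0int.mono_set (fun y hy => ⟨hy.1.le, hy.2.trans ht.2⟩))
          (hF0int.mono_set (fun y hy => ⟨ht.1.trans hy.1.le, hy.2⟩)),
          Ioc_union_Ioc_eq_Ioc ht.1 ht.2]
      rw [hPeq0 r ⟨hr.le, le_rfl⟩, hPeq0 t ht, this]; ring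
    have hGsplit : ∀ t ∈ Icc (0:ℝ) r, Ps t 0 - Ps r 0 = ∫ s in Ioc t r, G0 s := by
      intro t ht
      have : (∫ s in Ioc (0:ℝ) r, G0 s)
          = (∫ s in Ioc (0:ℝ) t, G0 s) + ∫ s in Ioc t r, G0 s := by
        rw [← setIntegral_union (Ioc_disjoint_Ioc.mpr ((min_le_left t r).trans
            (le_max_right 0 t))) measurableSet_Ioc
          (hG0int.mono_set (fun y hy => ⟨hy.1.le, hy.2.trans ht.2⟩))
          (hG0int.mono_set (fun y hy => ⟨ht.1.trans hy.1.le, hy.2⟩)),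
          Ioc_union_Ioc_eq_Ioc ht.1 ht.2]
      rw [hPseq0 r ⟨hr.le, le_rfl⟩, hPseq0 t ht, this]; ring
    set hfun : ℝ → ℝ := fun s => ‖P s 0‖ + ‖Ps s 0‖ with hhdef
    set cfun : ℝ → ℝ := fun s => ‖a s‖ with hcdef
    have hhcont : ContinuousOn hfun (Icc 0 r) := (hP0c.norm).add (hPs0c.norm)
    have hcint : IntegrableOn cfun (Icc 0 r) := haI.norm
    have hchint : IntegrableOn (fun s => cfun s * hfun s) (Icc 0 r) :=
      hcint.mul_continuousOn hhcont isCompact_Icc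
    have hineq : ∀ t ∈ Icc (0:ℝ) r, hfun t ≤ hfun r + ∫ s in Ioc t r, cfun s * hfun s := by
      intro t ht
      have hFnorm : ∀ s, ‖F0 s‖ ≤ cfun s * ‖Ps s 0‖ := by
        intro s
        have h1 : F0 s = -((starRingEnd ℂ) (a s) * Ps s 0) := by
          simp only [hF0def]; ring
        rw [h1, norm_neg, norm_mul, RCLike.norm_conj]
      have hGnorm : ∀ s, ‖G0 s‖ ≤ cfun s * ‖P s 0‖ := by
        intro s
        simp only [hG0def]
        rw [norm_mul]
      have hPsI : IntegrableOn (fun s => cfun s * ‖Ps s 0‖) (Ioc t r) :=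
        (hcint.mul_continuousOn hPs0c.norm isCompact_Icc).mono_set
          (fun y hy => ⟨ht.1.trans hy.1.le, hy.2⟩)
      have hPI : IntegrableOn (fun s => cfun s * ‖P s 0‖) (Ioc t r) :=
        (hcint.mul_continuousOn hP0c.norm isCompact_Icc).mono_set
          (fun y hy => ⟨ht.1.trans hy.1.le, hy.2⟩)
      have e1 : ‖P t 0‖ ≤ ‖P r 0‖ + ∫ s in Ioc t r, cfun s * ‖Ps s 0‖ := by
        have h1 : P t 0 = P r 0 - ∫ s in Ioc t r, F0 s := by
          have := hFsplit t ht; linear_combination -this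
        calc ‖P t 0‖ ≤ ‖P r 0‖ + ‖∫ s in Ioc t r, F0 s‖ := by
              rw [h1]; exact norm_sub_le _ _
          _ ≤ ‖P r 0‖ + ∫ s in Ioc t r, ‖F0 s‖ := by
              gcongr; exact norm_integral_le_integral_norm _
          _ ≤ ‖P r 0‖ + ∫ s in Ioc t r, cfun s * ‖Ps s 0‖ := by
              gcongr ‖P r 0‖ + ?_
              apply setIntegral_mono_on
                (IntegrableOn.mono_set (hF0int.norm) (fun y hy => ⟨ht.1.trans hy.1.le, hy.2⟩))
                hPsI measurableSet_Ioc
              intro s _; exact hFnorm s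
      have e2 : ‖Ps t 0‖ ≤ ‖Ps r 0‖ + ∫ s in Ioc t r, cfun s * ‖P s 0‖ := by
        have h1 : Ps t 0 = Ps r 0 + ∫ s in Ioc t r, G0 s := by
          have := hGsplit t ht; linear_combination this
        calc ‖Ps t 0‖ ≤ ‖Ps r 0‖ + ‖∫ s in Ioc t r, G0 s‖ := by
              rw [h1]; exact norm_add_le _ _
          _ ≤ ‖Ps r 0‖ + ∫ s in Ioc t r, ‖G0 s‖ := by
              gcongr; exact norm_integral_le_integral_norm _
          _ ≤ ‖Ps r 0‖ + ∫ s in Ioc t r, cfun s * ‖P s 0‖ := by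
              gcongr ‖Ps r 0‖ + ?_
              apply setIntegral_mono_on
                (IntegrableOn.mono_set (hG0int.norm) (fun y hy => ⟨ht.1.trans hy.1.le, hy.2⟩))
                hPI measurableSet_Ioc
              intro s _; exact hGnorm s
      have hsum : (∫ s in Ioc t r, cfun s * ‖Ps s 0‖) + (∫ s in Ioc t r, cfun s * ‖P s 0‖)
          = ∫ s in Ioc t r, cfun s * hfun s := by
        rw [← integral_add hPsI hPI]
        apply setIntegral_congr_fun measurableSet_Ioc
        intro s _
        rw [hhdef]; ring
      have := add_le_add e1 e2
      rw [hhdef]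
      dsimp only
      calc ‖P t 0‖ + ‖Ps t 0‖
          ≤ (‖P r 0‖ + ∫ s in Ioc t r, cfun s * ‖Ps s 0‖)
            + (‖Ps r 0‖ + ∫ s in Ioc t r, cfun s * ‖P s 0‖) := this
        _ = (‖P r 0‖ + ‖Ps r 0‖) + ∫ s in Ioc t r, cfun s * hfun s := by
            rw [← hsum]; ring
    have hfr : hfun r = 0 := by
      rw [hhdef]; dsimp only; rw [hP0, hPs0]; simp
    have hf0 : hfun 0 = 0 :=
      gronwall_zero hr.le hhcont
        (fun s _ => add_nonneg (norm_nonneg _) (norm_nonneg _))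
        hcint (fun s => norm_nonneg _) hineq hfr
    rw [hhdef] at hf0
    dsimp only at hf0
    rw [hP00 0, hPs00 0] at hf0
    norm_num at hf0
  · -- P r 0 ≠ 0 : cancel and use identity B
    have hnz : Complex.normSq (P r 0) ≠ 0 := by
      simpa using hP0
    have hnormC := congrArg Complex.normSq eqC
    rw [Complex.normSq_mul, Complex.normSq_mul, Complex.normSq_conj,
      Complex.normSq_conj, ← eqA] at hnormC
    have heqlam : Complex.normSq (P r lam) = Complex.normSq (Ps r lam) :=
      mul_left_cancel₀ hnz hnormC
    have hLHS : (starRingEnd ℂ) (P r lam) * P r lam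
        - (starRingEnd ℂ) (Ps r lam) * Ps r lam = 0 := by
      rw [← Complex.normSq_eq_conj_mul_self, ← Complex.normSq_eq_conj_mul_self,
        heqlam, sub_self]
    rw [hLHS] at idB
    have hreal : -(2 * lam.im * Qr) = 0 := by exact_mod_cast idB.symm
    have h2 : lam.im * Qr = 0 := by linarith
    rcases mul_eq_zero.mp h2 with h | h
    · exact hlam h
    · exact (ne_of_gt hQpos) h
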